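/- Let q be a prime power with char(F_q) > 3 and let r > 2 be a natural number with r dividing q − 1. Then the monomial P(x) = xʳ ∈ F_q[x] is not a Sidon polynomial over F_q × F_q. -/
import Mathlib


open Polynomial

/-- A subset `A` of an abelian group is a Sidon set if whenever
`a₁ - a₂ = a₃ - a₄` with all four elements in `A`, then `{a₁, a₄} = {a₂, a₃}`. -/
def IsSidon {G : Type*} [AddCommGroup G] (A : Set G) : Prop :=
  ∀ a₁ ∈ A, ∀ a₂ ∈ A, ∀ a₃ ∈ A, ∀ a₄ ∈ A,
    a₁ - a₂ = a₃ - a₄ → ({a₁, a₄} : Set G) = {a₂, a₃}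

/-- The set `(P,Q) = {(P(x), Q(x)) : x ∈ F}`. -/
def polyGraph {F : Type*} [Field F] (P Q : F[X]) : Set (F × F) :=
  Set.range fun x : F => (P.eval x, Q.eval x)

/-- A maximum Sidon set over `F × F`: a Sidon set with exactly `|F|` elements. -/
def IsMaxSidon {F : Type*} [Field F] [Fintype F] (A : Set (F × F)) : Prop :=
  IsSidon A ∧ A.ncard = Fintype.card F

/-- A polynomial `P` is Sidon if there is `Q` with `(P,Q)` a maximum Sidon set. -/
def IsSidonPoly {F : Type*} [Field F] [Fintype F] (P : F[X]) : Prop :=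
  ∃ Q : F[X], IsMaxSidon (polyGraph P Q)

/-- A permutation polynomial: its evaluation map is a bijection of `F`. -/
def IsPermPoly {F : Type*} [Field F] (R : F[X]) : Prop :=
  Function.Bijective fun x : F => R.eval x

/-- Sidon equivalence: `P' = R ∘ P ∘ T` (as functions on `F`)
for permutation polynomials `R`, `T`. -/
def SidonEquiv {F : Type*} [Field F] (P P' : F[X]) : Prop :=
  ∃ R T : F[X], IsPermPoly R ∧ IsPermPoly T ∧
    ∀ x : F, P'.eval x = R.eval (P.eval (T.eval x))
/-- over a field of characteristic `> 3`, if `r > 2` divides `q - 1`,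
then `xʳ` is not a Sidon polynomial. -/
theorem stmt_11 {F : Type*} [Field F] [Fintype F] (hchar : 3 < ringChar F)
    (r : ℕ) (hr : 2 < r) (hdvd : r ∣ Fintype.card F - 1) :
    ¬ IsSidonPoly ((X : F[X]) ^ r) := by
  classical
  rintro ⟨Q, hSidon, hcard⟩
  set f : F → F × F := fun x => (x ^ r, Q.eval x) with hf
  have hgraph : polyGraph ((X : F[X]) ^ r) Q = Set.range f := by
    simp [polyGraph, hf]
  have hrange : Set.range f = ↑(Finset.univ.image f) := by simp
  have hcardim : (Finset.univ.image f).card = (Finset.univ : Finset F).card := by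
    have := hcard
    rw [hgraph, hrange, Set.ncard_coe_finset] at this
    simp [this, Finset.card_univ]
  have hinj : Function.Injective f := by
    have h := Finset.card_image_iff.mp hcardim
    intro a b hab
    exact h (Finset.mem_coe.mpr (Finset.mem_univ a)) (Finset.mem_coe.mpr (Finset.mem_univ b)) hab
  have hmem : ∀ x : F, f x ∈ polyGraph ((X : F[X]) ^ r) Q := by
    intro x
    rw [hgraph]
    exact ⟨x, rfl⟩
  -- cardinality facts
  have h1q : 1 < Fintype.card F := Fintype.one_lt_card
  have hqm1 : Fintype.card F - 1 ≠ 0 := by omega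
  -- find ζ of order r in Fˣ
  obtain ⟨g, hg⟩ := IsCyclic.exists_ofOrder_eq_natCard (α := Fˣ)
  have hgord : orderOf g = Fintype.card F - 1 := by
    rw [hg, Nat.card_eq_fintype_card, Fintype.card_units]
  obtain ⟨k, hk⟩ := hdvd
  have hζord : orderOf (g ^ k) = r := by
    rw [orderOf_pow, hgord, hk]
    have hk0 : k ≠ 0 := by rintro rfl; simp [hk] at hqm1
    have hgcd : Nat.gcd (r * k) k = k := Nat.gcd_eq_right ⟨r, mul_comm r k⟩
    rw [hgcd]
    exact Nat.mul_div_cancel _ (Nat.pos_of_ne_zero hk0)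
  set ζ : Fˣ := g ^ k with hζ
  have hζr : (ζ : F) ^ r = 1 := by
    have : ζ ^ r = 1 := by rw [← hζord]; exact pow_orderOf_eq_one ζ
    simpa using congrArg (Units.val) this
  have hζ2r : ((ζ : F) ^ 2) ^ r = 1 := by
    rw [← pow_mul, mul_comm, pow_mul, hζr, one_pow]
  have hζne1 : (ζ : F) ≠ 1 := by
    intro h
    have : ζ = 1 := Units.ext h
    rw [this, orderOf_one] at hζord
    omega
  have hζ2ne1 : (ζ : F) ^ 2 ≠ 1 := by
    intro h
    have h2 : ζ ^ 2 = 1 := Units.ext (by push_cast; exact h)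
    have := orderOf_dvd_of_pow_eq_one h2
    rw [hζord] at this
    have := Nat.le_of_dvd (by norm_num) this
    omega
  have hζneζ2 : (ζ : F) ≠ (ζ : F) ^ 2 := by
    intro h
    apply hζne1
    have h2 : (ζ : F) * 1 = (ζ : F) * (ζ : F) := by rw [mul_one, ← pow_two, ← h]
    exact (mul_left_cancel₀ (Units.ne_zero ζ) h2).symm
  -- key Sidon consequence
  have key : ∀ c : F, c ^ r = 1 → c ≠ 1 → ∀ c' : F, c' ^ r = 1 → c' ≠ 1 →
      ∀ x y : F, x ≠ 0 → y ≠ 0 →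
      Q.eval x - Q.eval (c * x) = Q.eval y - Q.eval (c' * y) → x = y ∧ c = c' := by
    intro c hcr hc1 c' hcr' hc1' x y hx hy hQ
    have hcx : (c * x) ^ r = x ^ r := by rw [mul_pow, hcr, one_mul]
    have hcy : (c' * y) ^ r = y ^ r := by rw [mul_pow, hcr', one_mul]
    have hdiff : f x - f (c * x) = f y - f (c' * y) := by
      simp only [hf, Prod.mk_sub_mk, Prod.mk.injEq, hcx, hcy]
      exact ⟨by ring, hQ⟩
    have hset := hSidon _ (hmem x) _ (hmem (c * x)) _ (hmem y) _ (hmem (c' * y)) hdiff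
    have hfx : f x ∈ ({f (c * x), f y} : Set (F × F)) := by
      rw [← hset]; exact Set.mem_insert _ _
    have hne : f x ≠ f (c * x) := by
      intro h
      have := hinj h
      apply hc1
      have h2 : c * x = 1 * x := by rw [one_mul, ← this]
      exact mul_right_cancel₀ hx h2
    rcases hfx with h | h
    · exact absurd h hne
    · have hxy : x = y := hinj h
      subst hxy
      refine ⟨rfl, ?_⟩
      have hQ2 : Q.eval (c * x) = Q.eval (c' * x) := by linear_combination -hQ
      have hfcc : f (c * x) = f (c' * x) := by
        simp only [hf, Prod.mk.injEq]
        exact ⟨by rw [hcx, hcy], hQ2⟩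
      have := hinj hfcc
      exact mul_right_cancel₀ hx this
  -- values are nonzero
  have hnz : ∀ c : F, c ^ r = 1 → c ≠ 1 → ∀ x : F, x ≠ 0 →
      Q.eval x - Q.eval (c * x) ≠ 0 := by
    intro c hcr hc1 x hx h
    have hQe : Q.eval x = Q.eval (c * x) := sub_eq_zero.mp h
    have hcx : (c * x) ^ r = x ^ r := by rw [mul_pow, hcr, one_mul]
    have : f x = f (c * x) := by
      simp only [hf, Prod.mk.injEq]
      exact ⟨hcx.symm, hQe⟩
    have hxcx := hinj this
    apply hc1
    have : c * x = 1 * x := by rw [one_mul, ← hxcx]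
    exact mul_right_cancel₀ hx this
  -- Finset argument
  set S : Finset F := Finset.univ.erase 0 with hS
  have hScard : S.card = Fintype.card F - 1 := by
    rw [hS, Finset.card_erase_of_mem (Finset.mem_univ 0), Finset.card_univ]
  have himg : ∀ c : F, c ^ r = 1 → c ≠ 1 →
      S.image (fun x => Q.eval x - Q.eval (c * x)) = S := by
    intro c hcr hc1
    apply Finset.eq_of_subset_of_card_le
    · intro t ht
      obtain ⟨x, hxS, hxt⟩ := Finset.mem_image.mp ht
      have hx0 : x ≠ 0 := Finset.ne_of_mem_erase hxS
      rw [hS]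
      exact Finset.mem_erase.mpr ⟨by rw [← hxt]; exact hnz c hcr hc1 x hx0, Finset.mem_univ _⟩
    · apply le_of_eq
      symm
      rw [Finset.card_image_iff]
      intro x hxS y hyS hxy
      exact ((key c hcr hc1 c hcr hc1 x y (Finset.ne_of_mem_erase hxS)
        (Finset.ne_of_mem_erase hyS) hxy).1)
  have h1 := himg (ζ : F) hζr hζne1
  have h2 := himg ((ζ : F) ^ 2) hζ2r hζ2ne1
  have h1S : (1 : F) ∈ S := Finset.mem_erase.mpr ⟨one_ne_zero, Finset.mem_univ _⟩
  obtain ⟨x, hxS, hxt⟩ := Finset.mem_image.mp (h1 ▸ h1S)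
  obtain ⟨y, hyS, hyt⟩ := Finset.mem_image.mp (h2 ▸ h1S)
  have := (key (ζ : F) hζr hζne1 ((ζ : F) ^ 2) hζ2r hζ2ne1 x y
    (Finset.ne_of_mem_erase hxS) (Finset.ne_of_mem_erase hyS) (by rw [hxt, hyt])).2
  exact hζneζ2 this
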